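/- Let N ≥ 1, let S be a set of vectors in Fin N → ℝ, and let x ∈ S be lexicographically minimax optimal in S, i.e., x↓ ≤ y↓ in the lexicographic order for every y ∈ S, where v↓ denotes v sorted in nonincreasing order. Then x is Pareto optimal in S: there is no y ∈ S with y_n ≤ x_n for all n and y ≠ x. -/

import Mathlib

/-- `sortDesc v` is `v` with its components rearranged in nonincreasing order:
its `j`-th component is the `j`-th largest component of `v`. -/
noncomputable def sortDesc {N : ℕ} (v : Fin N → ℝ) : Fin N → ℝ :=
  fun j => v (Tuple.sort v (Fin.rev j))

open Classical in
/-- Sorting (nondecreasingly) is monotone w.r.t. pointwise order. -/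
lemma sorted_mono {N : ℕ} {y x : Fin N → ℝ} (h : ∀ n, y n ≤ x n) (j : Fin N) :
    (y ∘ Tuple.sort y) j ≤ (x ∘ Tuple.sort x) j := by
  set a := (x ∘ Tuple.sort x) j with ha
  have hx' : (j : ℕ) < Fintype.card {i // (x ∘ Tuple.sort x) i ≤ a} :=
    by rw [Fintype.card_subtype]; exact (Tuple.lt_card_le_iff_apply_le_of_monotone (j := j) (a := a) (Tuple.monotone_sort x)).2 le_rfl
  have hcx : Fintype.card {i // (x ∘ Tuple.sort x) i ≤ a} = Fintype.card {i // x i ≤ a} :=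
    Fintype.card_congr ((Tuple.sort x).subtypeEquiv (fun i => Iff.rfl))
  have hcy : Fintype.card {i // (y ∘ Tuple.sort y) i ≤ a} = Fintype.card {i // y i ≤ a} :=
    Fintype.card_congr ((Tuple.sort y).subtypeEquiv (fun i => Iff.rfl))
  have hsub : Fintype.card {i // x i ≤ a} ≤ Fintype.card {i // y i ≤ a} :=
    Fintype.card_le_of_injective (fun p => ⟨p.1, (h p.1).trans p.2⟩)
      (by intro p q hpq; simp only [Subtype.mk.injEq] at hpq; exact Subtype.ext hpq)
  have hy' : (j : ℕ) < Fintype.card {i // (y ∘ Tuple.sort y) i ≤ a} := by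
    omega
  rw [Fintype.card_subtype] at hy'
  exact (Tuple.lt_card_le_iff_apply_le_of_monotone (j := j) (a := a) (Tuple.monotone_sort y)).1 hy'

lemma sortDesc_mono {N : ℕ} {y x : Fin N → ℝ} (h : ∀ n, y n ≤ x n) (j : Fin N) :
    sortDesc y j ≤ sortDesc x j :=
  sorted_mono h (Fin.rev j)

lemma sum_sortDesc {N : ℕ} (v : Fin N → ℝ) : ∑ j, sortDesc v j = ∑ i, v i := by
  have := Equiv.sum_comp ((Fin.revPerm).trans (Tuple.sort v)) v
  simpa [sortDesc, Function.comp] using this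

/-- A lexicographically minimax optimal element of `S` is Pareto optimal in `S`. -/
theorem pareto_of_lexMinimax {N : ℕ} (hN : 1 ≤ N) (S : Set (Fin N → ℝ))
    (x : Fin N → ℝ) (hx : x ∈ S)
    (hopt : ∀ y ∈ S, toLex (sortDesc x) ≤ toLex (sortDesc y)) :
    ¬ ∃ y ∈ S, (∀ n, y n ≤ x n) ∧ y ≠ x := by
  rintro ⟨y, hyS, hle, hne⟩
  have hlex := hopt y hyS
  -- lex ≤ plus pointwise ≥ forces equality of sorted vectors
  have heq : sortDesc x = sortDesc y := by
    rcases hlex.lt_or_eq with hlt | heq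
    · obtain ⟨i, -, hi⟩ := hlt
      exact absurd hi (not_lt.2 (sortDesc_mono hle i))
    · exact congrArg ofLex heq
  have hsum : ∑ i, x i = ∑ i, y i := by
    rw [← sum_sortDesc x, ← sum_sortDesc y, heq]
  have hex : ∃ n, y n < x n := by
    by_contra hc
    push_neg at hc
    exact hne (funext fun n => le_antisymm (hle n) (hc n))
  obtain ⟨n, hn⟩ := hex
  have : ∑ i, y i < ∑ i, x i :=
    Finset.sum_lt_sum (fun i _ => hle i) ⟨n, Finset.mem_univ n, hn⟩
  linarith
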